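/- (Projection Lemma, Kempe–Kitaev–Regev) Let H = H₁ + H₂ be Hermitian operators on a Hilbert space decomposed as S ⊕ S⊥, where H₁ vanishes on S (H₁|_S = 0) and every eigenvector of H₁ in S⊥ has eigenvalue at least J, with J > 2‖H₂‖. Then λ(H₂|_S) − ‖H₂‖²/(J − 2‖H₂‖) ≤ λ(H) ≤ λ(H₂|_S), where λ denotes minimum eigenvalue and H₂|_S is H₂ restricted (compressed) to S. -/

import Mathlib

open Matrix
open scoped Kronecker Matrix.Norms.L2Operator ComplexOrder

noncomputable section

namespace Matrix.PosSemidef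

/-- The positive semidefinite square root (removed from Mathlib; old definition restored). -/
noncomputable def sqrt {n : Type*} [Fintype n] [DecidableEq n] {𝕜 : Type*} [RCLike 𝕜]
    {A : Matrix n n 𝕜} (hA : A.PosSemidef) : Matrix n n 𝕜 :=
  (hA.1.eigenvectorUnitary : Matrix n n 𝕜) * diagonal ((↑) ∘ Real.sqrt ∘ hA.1.eigenvalues) *
    (star hA.1.eigenvectorUnitary : Matrix n n 𝕜)

end Matrix.PosSemidef

/-- Trace norm `‖A‖₁ = tr √(Aᴴ A)`. -/
noncomputable def traceNorm {m : ℕ} (A : Matrix (Fin m) (Fin m) ℂ) : ℝ :=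
  ((Matrix.posSemidef_conjTranspose_mul_self A).sqrt.trace).re

/-- Quadratic form `Re ⟨v, H v⟩`. -/
noncomputable def quadForm {m : Type*} [Fintype m] (H : Matrix m m ℂ) (v : m → ℂ) : ℝ :=
  (dotProduct (star v) (H *ᵥ v)).re

/-- Squared Euclidean norm of a vector. -/
noncomputable def vnormSq {m : Type*} [Fintype m] (v : m → ℂ) : ℝ :=
  (dotProduct (star v) v).re

lemma pl_herm_cross {n : ℕ} {H : Matrix (Fin n) (Fin n) ℂ} (hH : H.IsHermitian)
    (x y : Fin n → ℂ) : (star x ⬝ᵥ (H *ᵥ y)).re = (star y ⬝ᵥ (H *ᵥ x)).re := by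
  have h : star y ⬝ᵥ (H *ᵥ x) = star (star x ⬝ᵥ (H *ᵥ y)) := by
    rw [star_dotProduct, star_mulVec, hH.eq, dotProduct_mulVec]
  rw [h, Complex.star_def, Complex.conj_re]

lemma pl_dot_re_bound {n : ℕ} (H : Matrix (Fin n) (Fin n) ℂ) (x y : Fin n → ℂ) :
    |(star x ⬝ᵥ (H *ᵥ y)).re| ≤ ‖H‖ * (‖(WithLp.equiv 2 (Fin n → ℂ)).symm x‖ * ‖(WithLp.equiv 2 (Fin n → ℂ)).symm y‖) := by
  have h1 : star x ⬝ᵥ (H *ᵥ y) = inner ℂ ((WithLp.equiv 2 (Fin n → ℂ)).symm x) ((WithLp.equiv 2 (Fin n → ℂ)).symm (H *ᵥ y)) := by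
    rw [dotProduct_comm]; rfl
  calc |(star x ⬝ᵥ (H *ᵥ y)).re| ≤ ‖star x ⬝ᵥ (H *ᵥ y)‖ := Complex.abs_re_le_norm _
    _ ≤ ‖(WithLp.equiv 2 (Fin n → ℂ)).symm x‖ * ‖(WithLp.equiv 2 (Fin n → ℂ)).symm (H *ᵥ y)‖ := by
        rw [h1]; exact norm_inner_le_norm _ _
    _ ≤ ‖(WithLp.equiv 2 (Fin n → ℂ)).symm x‖ * (‖H‖ * ‖(WithLp.equiv 2 (Fin n → ℂ)).symm y‖) := by
        exact mul_le_mul_of_nonneg_left (H.l2_opNorm_mulVec ((WithLp.equiv 2 (Fin n → ℂ)).symm y)) (norm_nonneg _)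
    _ = _ := by ring

lemma pl_vnormSq_eq {n : ℕ} (x : Fin n → ℂ) :
    vnormSq x = ‖(WithLp.equiv 2 (Fin n → ℂ)).symm x‖ ^ 2 := by
  have : star x ⬝ᵥ x = inner ℂ ((WithLp.equiv 2 (Fin n → ℂ)).symm x) ((WithLp.equiv 2 (Fin n → ℂ)).symm x) := by
    rw [dotProduct_comm]; rfl
  rw [vnormSq, this]
  exact inner_self_eq_norm_sq (𝕜 := ℂ) ((WithLp.equiv 2 (Fin n → ℂ)).symm x)

lemma pl_quad_smul {n : ℕ} (H : Matrix (Fin n) (Fin n) ℂ) (c : ℝ) (x : Fin n → ℂ) :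
    quadForm H ((c : ℂ) • x) = c ^ 2 * quadForm H x := by
  simp only [quadForm, star_smul, mulVec_smul, smul_dotProduct, dotProduct_smul,
    star_trivial, Complex.star_def, Complex.conj_ofReal, smul_eq_mul]
  rw [show (c : ℂ) * ((c : ℂ) * (star x ⬝ᵥ (H *ᵥ x))) = ((c ^ 2 : ℝ) : ℂ) * (star x ⬝ᵥ (H *ᵥ x)) by push_cast; ring,
    Complex.re_ofReal_mul]

set_option maxHeartbeats 1000000 in
/-- Projection Lemma, Kempe–Kitaev–Regev:
`λ(H₂|_S) − ‖H₂‖²/(J − 2‖H₂‖) ≤ λ(H₁ + H₂) ≤ λ(H₂|_S)`, where `H₁` vanishes on `S` and is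
`≥ J` on `S⊥`, with `J > 2‖H₂‖`.  The subspace `S` is given by its orthogonal projector `Pr`,
and minimum eigenvalues are characterized as minima of the Rayleigh quotient. -/
theorem projection_lemma {n : ℕ} (H₁ H₂ Pr : Matrix (Fin n) (Fin n) ℂ)
    (hH₁ : H₁.IsHermitian) (hH₂ : H₂.IsHermitian)
    (hPr : Pr.IsHermitian) (hPr2 : Pr * Pr = Pr)
    (hvanish : H₁ * Pr = 0)
    (J : ℝ) (hJ : 2 * ‖H₂‖ < J)
    (hgap : (H₁ - J • ((1 : Matrix (Fin n) (Fin n) ℂ) - Pr)).PosSemidef)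
    (lamS lamH : ℝ)
    (hlamS : IsLeast {r | ∃ v, Pr *ᵥ v = v ∧ vnormSq v = 1 ∧ quadForm H₂ v = r} lamS)
    (hlamH : IsLeast {r | ∃ v, vnormSq v = 1 ∧ quadForm (H₁ + H₂) v = r} lamH) :
    lamS - ‖H₂‖ ^ 2 / (J - 2 * ‖H₂‖) ≤ lamH ∧ lamH ≤ lamS := by
  set N := ‖H₂‖ with hN
  have hN0 : 0 ≤ N := norm_nonneg _
  have hK : 0 < J - 2 * N := by linarith
  obtain ⟨⟨w, hwP, hwn, hwq⟩, hSlb⟩ := hlamS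
  obtain ⟨⟨v, hvn, hvq⟩, hHlb⟩ := hlamH
  -- upper bound
  have hH₁w : H₁ *ᵥ w = 0 := by
    rw [← hwP, mulVec_mulVec, hvanish, zero_mulVec]
  have hupper : lamH ≤ lamS := by
    apply hHlb
    refine ⟨w, hwn, ?_⟩
    rw [← hwq]
    simp [quadForm, add_mulVec, hH₁w]
  refine ⟨?_, hupper⟩
  -- lamS ≤ N
  have hwnorm : ‖(WithLp.equiv 2 (Fin n → ℂ)).symm w‖ = 1 := by
    have := pl_vnormSq_eq w
    rw [hwn] at this
    nlinarith [norm_nonneg ((WithLp.equiv 2 (Fin n → ℂ)).symm w)]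
  have hlamSN : lamS ≤ N := by
    have := pl_dot_re_bound H₂ w w
    rw [hwnorm] at this
    rw [← hwq]
    calc quadForm H₂ w ≤ |(star w ⬝ᵥ (H₂ *ᵥ w)).re| := le_abs_self _
      _ ≤ N * (1 * 1) := this
      _ = N := by ring
  -- decomposition of v
  set v₁ : Fin n → ℂ := Pr *ᵥ v with hv₁
  set v₂ : Fin n → ℂ := v - v₁ with hv₂
  have hsum : v = v₁ + v₂ := by rw [hv₂]; ring
  have hPv₁ : Pr *ᵥ v₁ = v₁ := by rw [hv₁, mulVec_mulVec, hPr2]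
  have hPv₂ : Pr *ᵥ v₂ = 0 := by
    rw [hv₂, mulVec_sub, hPv₁, sub_self]
  have horth : star v₁ ⬝ᵥ v₂ = 0 := by
    calc star v₁ ⬝ᵥ v₂ = star v ᵥ* Prᴴ ⬝ᵥ v₂ := by rw [hv₁, star_mulVec]
      _ = star v ⬝ᵥ (Pr *ᵥ v₂) := by rw [hPr.eq, dotProduct_mulVec]
      _ = 0 := by rw [hPv₂, dotProduct_zero]
  have horth' : (star v₂ ⬝ᵥ v₁).re = 0 := by
    rw [star_dotProduct, horth, star_zero, Complex.zero_re]
  -- norms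
  set b := ‖(WithLp.equiv 2 (Fin n → ℂ)).symm v₁‖ with hb
  set a := ‖(WithLp.equiv 2 (Fin n → ℂ)).symm v₂‖ with ha
  have ha0 : 0 ≤ a := norm_nonneg _
  have hb0 : 0 ≤ b := norm_nonneg _
  have hpyth : b ^ 2 + a ^ 2 = 1 := by
    have h1 : vnormSq v = vnormSq v₁ + vnormSq v₂ := by
      simp only [vnormSq]
      rw [hsum, star_add, add_dotProduct, dotProduct_add, dotProduct_add, Complex.add_re,
        Complex.add_re, Complex.add_re, horth, Complex.zero_re, horth']
      ring
    rw [hvn, pl_vnormSq_eq, pl_vnormSq_eq, ← hb, ← ha] at h1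
    linarith
  have hb1 : b ≤ 1 := by nlinarith
  -- gap inequality : quadForm H₁ v ≥ J * a^2
  have hgapv : J * a ^ 2 ≤ quadForm H₁ v := by
    have h0 := hgap.dotProduct_mulVec_nonneg v
    rw [Complex.nonneg_iff] at h0
    have h0re := h0.1
    rw [sub_mulVec, dotProduct_sub, Complex.sub_re] at h0re
    have hsm : (star v ⬝ᵥ ((J • ((1 : Matrix (Fin n) (Fin n) ℂ) - Pr)) *ᵥ v)).re = J * a ^ 2 := by
      have h1v : ((1 : Matrix (Fin n) (Fin n) ℂ) - Pr) *ᵥ v = v₂ := by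
        rw [sub_mulVec, one_mulVec, ← hv₁, ← hv₂]
      rw [smul_mulVec, h1v, dotProduct_smul]
      have : (star v ⬝ᵥ v₂).re = a ^ 2 := by
        rw [hsum, star_add, add_dotProduct, Complex.add_re, horth, Complex.zero_re, zero_add]
        rw [← vnormSq, pl_vnormSq_eq]
      rw [Complex.real_smul, Complex.re_ofReal_mul, this]
    rw [hsm] at h0re
    unfold quadForm
    linarith
  -- quadForm H₂ v₁ ≥ lamS * b^2
  have hquadv₁ : lamS * b ^ 2 ≤ (star v₁ ⬝ᵥ (H₂ *ᵥ v₁)).re := by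
    rcases eq_or_ne b 0 with hb' | hb'
    · have hv₁0 : v₁ = 0 := by
        have : (WithLp.equiv 2 (Fin n → ℂ)).symm v₁ = 0 := norm_eq_zero.mp hb'
        simpa using congrArg (WithLp.equiv 2 (Fin n → ℂ)) this
      rw [hv₁0]
      simp [hb']
    · have hbpos : 0 < b := lt_of_le_of_ne hb0 (Ne.symm hb')
      set u : Fin n → ℂ := ((b⁻¹ : ℝ) : ℂ) • v₁ with hu
      have hPu : Pr *ᵥ u = u := by rw [hu, mulVec_smul, hPv₁]
      have hun : vnormSq u = 1 := by
        have : vnormSq u = (b⁻¹) ^ 2 * vnormSq v₁ := by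
          simp only [hu, vnormSq, star_smul, smul_dotProduct, dotProduct_smul,
            star_trivial, Complex.star_def, Complex.conj_ofReal, smul_eq_mul]
          rw [show ((b⁻¹ : ℝ) : ℂ) * (((b⁻¹ : ℝ) : ℂ) * (star v₁ ⬝ᵥ v₁)) = (((b⁻¹ : ℝ) ^ 2 : ℝ) : ℂ) * (star v₁ ⬝ᵥ v₁) by push_cast; ring,
            Complex.re_ofReal_mul]
        rw [this, pl_vnormSq_eq, ← hb]
        field_simp
      have hle := hSlb ⟨u, hPu, hun, rfl⟩
      have hqu : quadForm H₂ u = (b⁻¹) ^ 2 * (star v₁ ⬝ᵥ (H₂ *ᵥ v₁)).re := by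
        rw [hu, pl_quad_smul]
        rfl
      rw [hqu] at hle
      have hb2 : 0 < b ^ 2 := by positivity
      calc lamS * b ^ 2 ≤ ((b⁻¹) ^ 2 * (star v₁ ⬝ᵥ (H₂ *ᵥ v₁)).re) * b ^ 2 := by
            exact mul_le_mul_of_nonneg_right hle (le_of_lt hb2)
        _ = (star v₁ ⬝ᵥ (H₂ *ᵥ v₁)).re := by field_simp
  -- cross term bounds
  have hcross : |(star v₁ ⬝ᵥ (H₂ *ᵥ v₂)).re| ≤ N * (b * a) := pl_dot_re_bound H₂ v₁ v₂
  have hv₂v₂ : |(star v₂ ⬝ᵥ (H₂ *ᵥ v₂)).re| ≤ N * (a * a) := pl_dot_re_bound H₂ v₂ v₂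
  -- expand quadForm H₂ v
  have hexp : quadForm H₂ v = (star v₁ ⬝ᵥ (H₂ *ᵥ v₁)).re + 2 * (star v₁ ⬝ᵥ (H₂ *ᵥ v₂)).re
      + (star v₂ ⬝ᵥ (H₂ *ᵥ v₂)).re := by
    rw [quadForm, hsum, star_add, mulVec_add, add_dotProduct, dotProduct_add, dotProduct_add,
      Complex.add_re, Complex.add_re, Complex.add_re,
      pl_herm_cross hH₂ v₂ v₁]
    ring
  -- split lamH
  have hsplit : lamH = quadForm H₁ v + quadForm H₂ v := by
    rw [← hvq]
    simp only [quadForm, add_mulVec, dotProduct_add, Complex.add_re]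
  -- final arithmetic
  have hkey : lamS - lamH ≤ N ^ 2 / (J - 2 * N) := by
    rw [le_div_iff₀ hK]
    have habs1 : -(N * (b * a)) ≤ (star v₁ ⬝ᵥ (H₂ *ᵥ v₂)).re := neg_le_of_abs_le hcross
    have habs2 : -(N * (a * a)) ≤ (star v₂ ⬝ᵥ (H₂ *ᵥ v₂)).re := neg_le_of_abs_le hv₂v₂
    have hb2 : b ^ 2 = 1 - a ^ 2 := by linarith
    rw [hb2] at hquadv₁
    have h1 : 0 ≤ (N - lamS) * a ^ 2 := mul_nonneg (by linarith) (sq_nonneg a)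
    have h2 : 0 ≤ N * a * (1 - b) := mul_nonneg (mul_nonneg hN0 ha0) (by linarith)
    have hG : lamS - lamH ≤ 2 * N * a - (J - 2 * N) * a ^ 2 := by nlinarith
    have hG2 := mul_le_mul_of_nonneg_right hG hK.le
    have hsq := sq_nonneg ((J - 2 * N) * a - N)
    clear hgap hlamSN hSlb hHlb hsplit hexp hquadv₁ hgapv hcross hv₂v₂ habs1 habs2 h1 h2 hG
    linarith [hG2, hsq]
  linarith
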